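/- Bretagnolle–Huber inequality: for probability measures P and Q on the same measurable space and any event E, P(E) + Q(Eᶜ) ≥ (1/2)·exp(−KL(P‖Q)). -/

import Mathlib

open MeasureTheory
open scoped ENNReal

private lemma bh_sqrt_le (x : ℝ) (hx : 0 ≤ x) : Real.sqrt x ≤ 1 + x := by
  nlinarith [Real.sq_sqrt hx, sq_nonneg (Real.sqrt x - 1), Real.sqrt_nonneg x]

private lemma bh_mul_inv_sqrt (x : ℝ) (hx : 0 ≤ x) :
    x * (Real.sqrt x)⁻¹ = Real.sqrt x := by
  rcases eq_or_lt_of_le hx with h | h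
  · simp [← h]
  · have hs : Real.sqrt x ≠ 0 := (Real.sqrt_pos.mpr h).ne'
    field_simp [Real.mul_self_sqrt hx]
    rw [Real.sq_sqrt hx]

/-- Cauchy–Schwarz step: the set integral of `√(dP/dQ)` over `s` w.r.t. `Q`
is at most `√(P s) * √(Q s)`. -/
private lemma bh_cauchy_schwarz {Ω : Type*} [MeasurableSpace Ω]
    (P Q : Measure Ω) [IsProbabilityMeasure P] [IsProbabilityMeasure Q]
    (hPQ : P ≪ Q) {s : Set Ω} (hs : MeasurableSet s) :
    ∫ ω in s, Real.sqrt ((P.rnDeriv Q ω).toReal) ∂Q ≤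
      Real.sqrt ((P s).toReal) * Real.sqrt ((Q s).toReal) := by
  set r : Ω → ℝ := fun ω => ((P.rnDeriv Q ω).toReal) with hr
  have hrmeas : Measurable r := (Measure.measurable_rnDeriv P Q).ennreal_toReal
  have hrnonneg : ∀ ω, 0 ≤ r ω := fun ω => ENNReal.toReal_nonneg
  have hconj : Real.HolderConjugate 2 2 := Real.HolderConjugate.two_two
  have hrint : Integrable r Q := Measure.integrable_toReal_rnDeriv
  have hf : MemLp (fun ω => Real.sqrt (r ω)) (ENNReal.ofReal 2) (Q.restrict s) := by
    have h2 : (ENNReal.ofReal 2) = (2 : ℝ≥0∞) := by norm_num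
    rw [h2]
    refine MemLp.restrict s ?_
    refine (memLp_two_iff_integrable_sq (hrmeas.sqrt.aestronglyMeasurable)).mpr ?_
    have : (fun ω => Real.sqrt (r ω) ^ 2) = r := by
      funext ω; exact Real.sq_sqrt (hrnonneg ω)
    rwa [this]
  have hg : MemLp (fun _ : Ω => (1 : ℝ)) (ENNReal.ofReal 2) (Q.restrict s) :=
    memLp_const 1
  have H := MeasureTheory.integral_mul_le_Lp_mul_Lq_of_nonneg hconj
    (Filter.Eventually.of_forall fun ω => Real.sqrt_nonneg (r ω))
    (Filter.Eventually.of_forall fun _ => zero_le_one) hf hg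
  simp only [mul_one] at H
  have h1 : (fun ω => Real.sqrt (r ω) ^ (2 : ℝ)) = r := by
    funext ω
    rw [show (2 : ℝ) = ((2 : ℕ) : ℝ) by norm_num, Real.rpow_natCast]
    exact Real.sq_sqrt (hrnonneg ω)
  have h2 : ∫ ω in s, r ω ∂Q = (P s).toReal :=
    Measure.setIntegral_toReal_rnDeriv hPQ s
  have h3 : ∫ _ω in s, (1 : ℝ) ^ (2 : ℝ) ∂Q = (Q s).toReal := by
    simp [Real.one_rpow, Measure.real]
  rw [h1, h2, h3] at H
  calc ∫ ω in s, Real.sqrt (r ω) ∂Q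
      ≤ (P s).toReal ^ (1 / 2 : ℝ) * (Q s).toReal ^ (1 / 2 : ℝ) := H
    _ = Real.sqrt ((P s).toReal) * Real.sqrt ((Q s).toReal) := by
        rw [Real.sqrt_eq_rpow, Real.sqrt_eq_rpow]

/-- Bretagnolle–Huber inequality: for probability measures `P ≪ Q` with (finite)
Kullback–Leibler divergence `∫ log (dP/dQ) dP`, and any event `E`,
`P(E) + Q(Eᶜ) ≥ (1/2) exp(−KL(P‖Q))`. -/
theorem bretagnolle_huber {Ω : Type*} [MeasurableSpace Ω]
    (P Q : Measure Ω) [IsProbabilityMeasure P] [IsProbabilityMeasure Q]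
    (hPQ : P ≪ Q)
    (hint : Integrable (fun ω => Real.log ((P.rnDeriv Q ω).toReal)) P)
    (E : Set Ω) (hE : MeasurableSet E) :
    (1 / 2) * Real.exp (-(∫ ω, Real.log ((P.rnDeriv Q ω).toReal) ∂P)) ≤
      (P E).toReal + (Q Eᶜ).toReal := by
  set r : Ω → ℝ := fun ω => ((P.rnDeriv Q ω).toReal) with hr
  have hrmeas : Measurable r := (Measure.measurable_rnDeriv P Q).ennreal_toReal
  have hrnonneg : ∀ ω, 0 ≤ r ω := fun ω => ENNReal.toReal_nonneg
  set g : Ω → ℝ := fun ω => (Real.sqrt (r ω))⁻¹ with hg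
  have hgmeas : Measurable g := hrmeas.sqrt.inv
  set KL : ℝ := ∫ ω, Real.log (r ω) ∂P with hKL
  -- log g = -(1/2) log r
  have hlogg : (fun ω => Real.log (g ω)) = fun ω => -(2⁻¹ * Real.log (r ω)) := by
    funext ω
    rw [hg, Real.log_inv, Real.log_sqrt (hrnonneg ω)]
    ring
  have hloggint : Integrable (fun ω => Real.log (g ω)) P := by
    rw [hlogg]
    exact (hint.const_mul 2⁻¹).neg
  have hm : ∫ ω, Real.log (g ω) ∂P = -(2⁻¹ * KL) := by
    rw [hlogg, integral_neg, integral_const_mul]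
  -- integrability of sqrt r wrt Q
  have hrint : Integrable r Q := Measure.integrable_toReal_rnDeriv
  have hsqrtint : Integrable (fun ω => Real.sqrt (r ω)) Q := by
    refine Integrable.mono' (integrable_const (1:ℝ) |>.add hrint)
      hrmeas.sqrt.aestronglyMeasurable ?_
    refine Filter.Eventually.of_forall fun ω => ?_
    rw [Real.norm_of_nonneg (Real.sqrt_nonneg _)]
    exact bh_sqrt_le (r ω) (hrnonneg ω)
  -- r • g = sqrt r
  have hrg : (fun ω => r ω • g ω) = fun ω => Real.sqrt (r ω) := by
    funext ω
    exact bh_mul_inv_sqrt (r ω) (hrnonneg ω)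
  -- g is integrable wrt P
  have hgint : Integrable g P := by
    refine (MeasureTheory.integrable_rnDeriv_smul_iff hPQ).mp ?_
    rw [hrg]
    exact hsqrtint
  -- Jensen: exp (∫ log g dP) ≤ ∫ g dP
  have hae : ∀ᵐ ω ∂P, 0 < r ω := by
    filter_upwards [Measure.rnDeriv_pos hPQ, hPQ.ae_le (Measure.rnDeriv_lt_top P Q)]
      with ω h0 htop
    exact ENNReal.toReal_pos h0.ne' htop.ne
  set m : ℝ := ∫ ω, Real.log (g ω) ∂P with hmdef
  have hjensen : Real.exp m ≤ ∫ ω, g ω ∂P := by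
    have hptwise : ∀ᵐ ω ∂P,
        Real.log (g ω) - m ≤ Real.exp (-m) * g ω - 1 := by
      filter_upwards [hae] with ω h0
      have hgpos : 0 < g ω := by
        rw [hg]
        exact inv_pos.mpr (Real.sqrt_pos.mpr h0)
      have h1 : Real.log (g ω * Real.exp (-m)) ≤ g ω * Real.exp (-m) - 1 :=
        Real.log_le_sub_one_of_pos (by positivity)
      rw [Real.log_mul hgpos.ne' (Real.exp_pos _).ne', Real.log_exp] at h1
      linarith
    have hIle := integral_mono_ae (hloggint.sub (integrable_const m))
      ((hgint.const_mul (Real.exp (-m))).sub (integrable_const 1)) hptwise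
    simp only [Pi.sub_apply] at hIle
    rw [integral_sub hloggint (integrable_const m),
      integral_sub (hgint.const_mul _) (integrable_const 1),
      integral_const, integral_const, integral_const_mul] at hIle
    simp only [Measure.real, measure_univ, ENNReal.toReal_one, one_smul, smul_eq_mul, one_mul] at hIle
    have h2 : 1 ≤ Real.exp (-m) * ∫ ω, g ω ∂P := by linarith
    have h3 : Real.exp m * 1 ≤ Real.exp m * (Real.exp (-m) * ∫ ω, g ω ∂P) := by
      exact mul_le_mul_of_nonneg_left h2 (Real.exp_pos m).le
    rwa [mul_one, ← mul_assoc, ← Real.exp_add, add_neg_cancel, Real.exp_zero, one_mul] at h3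
  have hint_eq : ∫ ω, g ω ∂P = ∫ ω, Real.sqrt (r ω) ∂Q := by
    rw [← MeasureTheory.integral_rnDeriv_smul hPQ (f := g)]
    refine integral_congr_ae (Filter.Eventually.of_forall fun ω => ?_)
    simpa [smul_eq_mul] using bh_mul_inv_sqrt (r ω) (hrnonneg ω)
  -- split into E and Eᶜ
  set a : ℝ := ∫ ω in E, Real.sqrt (r ω) ∂Q with ha
  set b : ℝ := ∫ ω in Eᶜ, Real.sqrt (r ω) ∂Q with hb
  have hsplit : ∫ ω, Real.sqrt (r ω) ∂Q = a + b := by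
    rw [ha, hb, integral_add_compl hE hsqrtint]
  have hanonneg : 0 ≤ a :=
    setIntegral_nonneg hE fun ω _ => Real.sqrt_nonneg _
  have hbnonneg : 0 ≤ b :=
    setIntegral_nonneg hE.compl fun ω _ => Real.sqrt_nonneg _
  have hCSa : a ≤ Real.sqrt ((P E).toReal) * Real.sqrt ((Q E).toReal) :=
    bh_cauchy_schwarz P Q hPQ hE
  have hCSb : b ≤ Real.sqrt ((P Eᶜ).toReal) * Real.sqrt ((Q Eᶜ).toReal) :=
    bh_cauchy_schwarz P Q hPQ hE.compl
  -- squared bounds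
  have hpE : (P E).toReal ≤ 1 := by
    rw [← ENNReal.toReal_one]
    exact ENNReal.toReal_mono ENNReal.one_ne_top (prob_le_one)
  have hqE : (Q E).toReal ≤ 1 := by
    rw [← ENNReal.toReal_one]
    exact ENNReal.toReal_mono ENNReal.one_ne_top (prob_le_one)
  have hpEc : (P Eᶜ).toReal ≤ 1 := by
    rw [← ENNReal.toReal_one]
    exact ENNReal.toReal_mono ENNReal.one_ne_top (prob_le_one)
  have hqEc : (Q Eᶜ).toReal ≤ 1 := by
    rw [← ENNReal.toReal_one]
    exact ENNReal.toReal_mono ENNReal.one_ne_top (prob_le_one)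
  have hpE0 : (0:ℝ) ≤ (P E).toReal := ENNReal.toReal_nonneg
  have hqE0 : (0:ℝ) ≤ (Q E).toReal := ENNReal.toReal_nonneg
  have hpEc0 : (0:ℝ) ≤ (P Eᶜ).toReal := ENNReal.toReal_nonneg
  have hqEc0 : (0:ℝ) ≤ (Q Eᶜ).toReal := ENNReal.toReal_nonneg
  have ha2 : a * a ≤ (P E).toReal * (Q E).toReal := by
    nlinarith [Real.mul_self_sqrt hpE0, Real.mul_self_sqrt hqE0,
      Real.sqrt_nonneg ((P E).toReal), Real.sqrt_nonneg ((Q E).toReal)]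
  have hb2 : b * b ≤ (P Eᶜ).toReal * (Q Eᶜ).toReal := by
    nlinarith [Real.mul_self_sqrt hpEc0, Real.mul_self_sqrt hqEc0,
      Real.sqrt_nonneg ((P Eᶜ).toReal), Real.sqrt_nonneg ((Q Eᶜ).toReal)]
  -- assemble
  have hS : Real.exp (-(2⁻¹ * KL)) ≤ a + b := by
    rw [← hm]
    calc Real.exp m ≤ ∫ ω, g ω ∂P := hjensen
      _ = a + b := by rw [hint_eq, hsplit]
  have hexp : Real.exp (-KL) =
      Real.exp (-(2⁻¹ * KL)) * Real.exp (-(2⁻¹ * KL)) := by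
    rw [← Real.exp_add]; ring_nf
  have hSpos : 0 < Real.exp (-(2⁻¹ * KL)) := Real.exp_pos _
  show (1 / 2) * Real.exp (-KL) ≤ (P E).toReal + (Q Eᶜ).toReal
  rw [hexp]
  nlinarith [sq_nonneg (a - b), hSpos.le, mul_le_mul_of_nonneg_left hqE hpE0,
    mul_le_mul_of_nonneg_left hpEc hqEc0,
    mul_self_le_mul_self hSpos.le hS]
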